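/- Every weak* i-measure μ : 𝓜 → L(E,F*) has finite total semivariation. -/

import Mathlib

open Filter Topology ENNReal

/-- A series of bounded operators `∑ Tₙ` is *independently convergent* if
`∑ Tₙ xₙ` converges in norm for every bounded sequence `(xₙ)`. -/
def IndepConv {E F : Type*} [NormedAddCommGroup E] [NormedSpace ℝ E]
    [NormedAddCommGroup F] [NormedSpace ℝ F] (T : ℕ → E →L[ℝ] F) : Prop :=
  ∀ x : ℕ → E, (∃ C : ℝ, ∀ n, ‖x n‖ ≤ C) →
    ∃ y : F, Tendsto (fun N => ∑ n ∈ Finset.range N, T n (x n)) atTop (𝓝 y)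

/-- An *i-measure* is an operator-valued set function which is countably additive in the
strong operator topology, and such that `∑ μ(Aₙ)` is independently convergent for every
sequence of pairwise disjoint measurable sets `(Aₙ)`. -/
def IsIMeasure {Z E F : Type*} [MeasurableSpace Z]
    [NormedAddCommGroup E] [NormedSpace ℝ E] [NormedAddCommGroup F] [NormedSpace ℝ F]
    (μ : Set Z → E →L[ℝ] F) : Prop :=
  (∀ A : ℕ → Set Z, (∀ n, MeasurableSet (A n)) → Pairwise (Function.onFun Disjoint A) →
    ∀ x : E,
      Tendsto (fun N => ∑ n ∈ Finset.range N, μ (A n) x) atTop (𝓝 (μ (⋃ n, A n) x))) ∧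
  (∀ A : ℕ → Set Z, (∀ n, MeasurableSet (A n)) → Pairwise (Function.onFun Disjoint A) →
    IndepConv fun n => μ (A n))

/-- The semivariation `‖μ‖_A` of an operator-valued set function `μ` on a set `A`. -/
noncomputable def semivar {Z E F : Type*} [MeasurableSpace Z]
    [NormedAddCommGroup E] [NormedSpace ℝ E] [NormedAddCommGroup F] [NormedSpace ℝ F]
    (μ : Set Z → E →L[ℝ] F) (A : Set Z) : ℝ≥0∞ :=
  ⨆ (N : ℕ) (B : ℕ → Set Z) (_ : ∀ n, MeasurableSet (B n)) (_ : ∀ n, B n ⊆ A)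
    (_ : Pairwise (Function.onFun Disjoint B)) (x : ℕ → E) (_ : ∀ n, ‖x n‖ ≤ 1),
    ENNReal.ofReal ‖∑ n ∈ Finset.range N, μ (B n) (x n)‖

section Aux

variable {Z E : Type*} [MeasurableSpace Z] [NormedAddCommGroup E] [NormedSpace ℝ E]
variable {ν : Set Z → E →L[ℝ] ℝ}

lemma iMeasure_empty (hν : IsIMeasure ν) : ν ∅ = 0 := by
  ext x
  have hd : Pairwise (Function.onFun Disjoint (fun _ : ℕ => (∅ : Set Z))) := by
    intro i j _; simp [Function.onFun]
  have h := hν.1 (fun _ => ∅) (fun _ => MeasurableSet.empty) hd x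
  have hU : (⋃ _ : ℕ, (∅ : Set Z)) = ∅ := by simp
  rw [hU] at h
  have h2 : Tendsto (fun N : ℕ => ∑ n ∈ Finset.range (N + 1), ν ∅ x) atTop (𝓝 (ν ∅ x)) :=
    h.comp (tendsto_add_atTop_nat 1)
  have h3 := h2.sub h
  have h4 : Tendsto (fun _ : ℕ => ν ∅ x) atTop (𝓝 ((ν ∅) x - (ν ∅) x)) := by
    refine h3.congr fun N => ?_
    rw [Finset.sum_range_succ]; ring
  rw [sub_self] at h4
  have h5 := tendsto_nhds_unique h4 tendsto_const_nhds
  simpa using h5.symm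

lemma iMeasure_union (hν : IsIMeasure ν) {B C : Set Z} (hBm : MeasurableSet B)
    (hCm : MeasurableSet C) (hd : Disjoint B C) : ν (B ∪ C) = ν B + ν C := by
  ext x
  set A : ℕ → Set Z := fun n => if n = 0 then B else if n = 1 then C else ∅ with hA
  have hAm : ∀ n, MeasurableSet (A n) := by
    intro n; simp only [hA]; split_ifs <;> first | assumption | exact MeasurableSet.empty
  have hAd : Pairwise (Function.onFun Disjoint A) := by
    intro i j hij
    simp only [Function.onFun, hA]
    split_ifs <;> simp_all [hd, hd.symm]
  have hU : (⋃ n, A n) = B ∪ C := by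
    apply Set.Subset.antisymm
    · refine Set.iUnion_subset fun n => ?_
      simp only [hA]; split_ifs
      exacts [Set.subset_union_left, Set.subset_union_right, Set.empty_subset _]
    · rintro z (h | h)
      · exact Set.mem_iUnion.2 ⟨0, by simp [hA, h]⟩
      · exact Set.mem_iUnion.2 ⟨1, by simp [hA, h]⟩
  have h := hν.1 A hAm hAd x
  rw [hU] at h
  have hev : ∀ N, 2 ≤ N → ∑ n ∈ Finset.range N, ν (A n) x = ν B x + ν C x := by
    intro N hN
    have hz : ∀ n ∈ Finset.range N, n ∉ Finset.range 2 → ν (A n) x = 0 := by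
      intro n _ hn2
      have hn : ¬ n < 2 := by simpa [Finset.mem_range] using hn2
      have h0 : n ≠ 0 := by omega
      have h1 : n ≠ 1 := by omega
      simp [hA, h0, h1, iMeasure_empty hν]
    rw [← Finset.sum_subset (Finset.range_subset_range.2 hN) hz]
    rw [Finset.sum_range_succ, Finset.sum_range_one]
    simp [hA]
  have hconst : Tendsto (fun N => ∑ n ∈ Finset.range N, ν (A n) x) atTop (𝓝 (ν B x + ν C x)) := by
    apply Tendsto.congr' _ tendsto_const_nhds
    filter_upwards [eventually_ge_atTop 2] with N hN using (hev N hN).symm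
  have := tendsto_nhds_unique h hconst
  simpa using this

lemma iMeasure_inter_diff (hν : IsIMeasure ν) {D B : Set Z} (hD : MeasurableSet D)
    (hB : MeasurableSet B) : ν D = ν (D ∩ B) + ν (D \ B) := by
  rw [← iMeasure_union hν (hD.inter hB) (hD.diff hB)
      (((Set.disjoint_sdiff_left).symm).mono_left Set.inter_subset_right)]
  rw [Set.inter_union_diff]

lemma iMeasure_subset (hν : IsIMeasure ν) {A B : Set Z} (hA : MeasurableSet A)
    (hB : MeasurableSet B) (hBA : B ⊆ A) : ν A = ν B + ν (A \ B) := by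
  have := iMeasure_inter_diff hν hA hB
  rwa [Set.inter_eq_self_of_subset_right hBA] at this

def BadSet (ν : Set Z → E →L[ℝ] ℝ) (A : Set Z) : Prop :=
  ∀ M : ℝ, ∃ (N : ℕ) (B : ℕ → Set Z), (∀ n, MeasurableSet (B n)) ∧ (∀ n, B n ⊆ A) ∧
    Pairwise (Function.onFun Disjoint B) ∧ (∀ n, N ≤ n → B n = ∅) ∧
    M ≤ ∑ n ∈ Finset.range N, ‖ν (B n)‖

lemma badSet_mono {A B : Set Z} (hAB : A ⊆ B) (h : BadSet ν A) : BadSet ν B := by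
  intro M
  obtain ⟨N, C, h1, h2, h3, h4, h5⟩ := h M
  exact ⟨N, C, h1, fun n => (h2 n).trans hAB, h3, h4, h5⟩

lemma badSet_split (hν : IsIMeasure ν) {A B : Set Z} (hB : MeasurableSet B)
    (h : BadSet ν A) : BadSet ν (A ∩ B) ∨ BadSet ν (A \ B) := by
  by_contra hc
  push_neg at hc
  obtain ⟨h1, h2⟩ := hc
  simp only [BadSet, not_forall, not_exists, not_and, not_le] at h1 h2
  obtain ⟨M₁, hM₁⟩ := h1
  obtain ⟨M₂, hM₂⟩ := h2
  obtain ⟨N, D, hDm, hDs, hDd, hDp, hDsum⟩ := h (M₁ + M₂)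
  have b1 := hM₁ N (fun n => D n ∩ B) (fun n => (hDm n).inter hB)
    (fun n => Set.inter_subset_inter (hDs n) subset_rfl)
    (fun i j hij => Disjoint.mono Set.inter_subset_left Set.inter_subset_left (hDd hij))
    (fun n hn => by simp [hDp n hn])
  have b2 := hM₂ N (fun n => D n \ B) (fun n => (hDm n).diff hB)
    (fun n => Set.diff_subset_diff_left (hDs n))
    (fun i j hij => Disjoint.mono Set.diff_subset Set.diff_subset (hDd hij))
    (fun n hn => by simp [hDp n hn])
  have key : ∑ n ∈ Finset.range N, ‖ν (D n)‖ ≤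
      (∑ n ∈ Finset.range N, ‖ν (D n ∩ B)‖) + ∑ n ∈ Finset.range N, ‖ν (D n \ B)‖ := by
    rw [← Finset.sum_add_distrib]
    refine Finset.sum_le_sum fun n _ => ?_
    rw [iMeasure_inter_diff hν (hDm n) hB]
    exact norm_add_le _ _
  linarith

lemma badSet_pieces (hν : IsIMeasure ν) {A : Set Z} (C : ℕ → Set Z)
    (hCm : ∀ n, MeasurableSet (C n)) :
    ∀ N, BadSet ν A → BadSet ν (A \ ⋃ n, ⋃ _ : n < N, C n) ∨ ∃ k < N, BadSet ν (A ∩ C k) := by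
  intro N
  induction N with
  | zero => intro h; left; simpa using h
  | succ N ih =>
    intro h
    rcases ih h with hbad | ⟨k, hk, hb⟩
    · rcases badSet_split hν (hCm N) hbad with h1 | h2
      · right
        exact ⟨N, N.lt_succ_self, badSet_mono (Set.inter_subset_inter Set.diff_subset subset_rfl) h1⟩
      · left
        have hU : (⋃ n, ⋃ _ : n < N + 1, C n) = (⋃ n, ⋃ _ : n < N, C n) ∪ C N := by
          ext z
          simp only [Set.mem_iUnion, Set.mem_union]
          constructor
          · rintro ⟨n, hn, hz⟩
            rcases Nat.lt_succ_iff_lt_or_eq.1 hn with hn' | rfl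
            · exact Or.inl ⟨n, hn', hz⟩
            · exact Or.inr hz
          · rintro (⟨n, hn, hz⟩ | hz)
            · exact ⟨n, Nat.lt_succ_of_lt hn, hz⟩
            · exact ⟨N, N.lt_succ_self, hz⟩
        rw [hU, ← Set.diff_diff]
        exact h2
    · exact Or.inr ⟨k, Nat.lt_succ_of_lt hk, hb⟩

lemma pad_iUnion {B : ℕ → Set Z} {N : ℕ} (h : ∀ n, N ≤ n → B n = ∅) :
    (⋃ n, B n) = ⋃ n, ⋃ _ : n < N, B n := by
  apply Set.Subset.antisymm
  · refine Set.iUnion_subset fun n => ?_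
    by_cases hn : n < N
    · intro z hz; exact Set.mem_iUnion₂.2 ⟨n, hn, hz⟩
    · rw [h n (le_of_not_gt hn)]; exact Set.empty_subset _
  · exact Set.iUnion₂_subset fun n _ => Set.subset_iUnion B n

lemma single_iUnion (S : Set Z) : (⋃ n : ℕ, (if n = 0 then S else ∅)) = S := by
  apply Set.Subset.antisymm
  · refine Set.iUnion_subset fun n => ?_
    split_ifs
    exacts [subset_rfl, Set.empty_subset _]
  · intro z hz; exact Set.mem_iUnion.2 ⟨0, by simpa⟩

lemma single_props (S A : Set Z) (hS : MeasurableSet S) (hSA : S ⊆ A) :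
    (∀ n, MeasurableSet ((fun n => if n = 0 then S else ∅) n)) ∧
    (∀ n, (fun n => if n = 0 then S else ∅) n ⊆ A) ∧
    Pairwise (Function.onFun Disjoint (fun n : ℕ => if n = 0 then S else ∅)) ∧
    (∀ n, 1 ≤ n → (fun n => if n = 0 then S else ∅) n = ∅) := by
  refine ⟨fun n => ?_, fun n => ?_, fun i j hij => ?_, fun n hn => ?_⟩
  · dsimp only; split_ifs; exacts [hS, MeasurableSet.empty]
  · dsimp only; split_ifs; exacts [hSA, Set.empty_subset _]
  · simp only [Function.onFun]
    split_ifs with h1 h2 h2 <;> simp_all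
  · have : n ≠ 0 := by omega
    simp [this]

lemma badSet_step (hν : IsIMeasure ν) {A : Set Z} (hA : MeasurableSet A)
    (h : BadSet ν A) (M : ℝ) :
    ∃ (N : ℕ) (B : ℕ → Set Z), (∀ n, MeasurableSet (B n)) ∧ (∀ n, B n ⊆ A) ∧
      Pairwise (Function.onFun Disjoint B) ∧ (∀ n, N ≤ n → B n = ∅) ∧
      (M ≤ ∑ n ∈ Finset.range N, ‖ν (B n)‖) ∧ BadSet ν (A \ ⋃ n, B n) := by
  by_cases hbdd : ∃ s : ℝ, ∀ B' : Set Z, B' ⊆ A → MeasurableSet B' → ‖ν B'‖ ≤ s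
  · obtain ⟨s, hs⟩ := hbdd
    have hs0 : (0:ℝ) ≤ s := le_trans (norm_nonneg _) (hs ∅ (Set.empty_subset _) MeasurableSet.empty)
    obtain ⟨N, C, hCm, hCs, hCd, hCp, hCsum⟩ := h (M + s)
    rcases badSet_pieces hν C hCm N h with hbad | ⟨k, hk, hb⟩
    · refine ⟨N, C, hCm, hCs, hCd, hCp, by linarith, ?_⟩
      rwa [pad_iUnion hCp]
    · -- replace C k by ∅
      set C' := Function.update C k (∅ : Set Z) with hC'
      have hC'm : ∀ n, MeasurableSet (C' n) := by
        intro n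
        by_cases hn : n = k
        · subst hn; simp [hC', Function.update_self]
        · simp [hC', Function.update_of_ne hn, hCm n]
      have hC's : ∀ n, C' n ⊆ A := by
        intro n
        by_cases hn : n = k
        · subst hn; simp [hC', Function.update_self]
        · simp only [hC', Function.update_of_ne hn]; exact hCs n
      have hC'd : Pairwise (Function.onFun Disjoint C') := by
        intro i j hij
        simp only [Function.onFun, hC']
        by_cases hi : i = k
        · subst hi; simp [Function.update_self]
        · by_cases hj : j = k
          · subst hj; simp [Function.update_self]
          · rw [Function.update_of_ne hi, Function.update_of_ne hj]
            exact hCd hij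
      have hC'p : ∀ n, N ≤ n → C' n = ∅ := by
        intro n hn
        have hnk : n ≠ k := by omega
        simp only [hC', Function.update_of_ne hnk]; exact hCp n hn
      have hkmem : k ∈ Finset.range N := Finset.mem_range.2 hk
      have hsum1 : ∑ n ∈ Finset.range N, ‖ν (C' n)‖
          = ∑ n ∈ Finset.range N \ {k}, ‖ν (C n)‖ := by
        rw [Finset.sum_eq_sum_sdiff_singleton_add hkmem (fun n => ‖ν (C' n)‖)]
        have : ‖ν (C' k)‖ = 0 := by simp [hC', Function.update_self, iMeasure_empty hν]
        rw [this, add_zero]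
        refine Finset.sum_congr rfl fun n hn => ?_
        have hnk : n ≠ k := by
          simp only [Finset.mem_sdiff, Finset.mem_singleton] at hn
          exact hn.2
        rw [hC', Function.update_of_ne hnk]
      have hsum2 : ∑ n ∈ Finset.range N, ‖ν (C n)‖
          = (∑ n ∈ Finset.range N \ {k}, ‖ν (C n)‖) + ‖ν (C k)‖ :=
        Finset.sum_eq_sum_sdiff_singleton_add hkmem _
      have hCk : ‖ν (C k)‖ ≤ s := hs (C k) (hCs k) (hCm k)
      refine ⟨N, C', hC'm, hC's, hC'd, hC'p, by rw [hsum1]; linarith, ?_⟩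
      refine badSet_mono ?_ hb
      intro z hz
      refine ⟨hz.1, ?_⟩
      intro hzU
      obtain ⟨n, hzn⟩ := Set.mem_iUnion.1 hzU
      by_cases hn : n = k
      · subst hn; simp [hC', Function.update_self] at hzn
      · rw [hC', Function.update_of_ne hn] at hzn
        exact (Set.disjoint_left.1 (hCd hn) hzn) hz.2
  · push_neg at hbdd
    obtain ⟨B', hB's, hB'm, hB'n⟩ := hbdd (M + ‖ν A‖)
    have hadd : ν A = ν B' + ν (A \ B') := iMeasure_subset hν hA hB'm hB's
    have hnd : M ≤ ‖ν (A \ B')‖ := by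
      have h1 : ν (A \ B') = ν A - ν B' := by rw [hadd]; abel
      have h2 : ‖ν B'‖ - ‖ν A‖ ≤ ‖ν B' - ν A‖ := norm_sub_norm_le _ _
      rw [h1, norm_sub_rev]
      linarith
    rcases badSet_split hν hB'm h with h1 | h2
    · -- BadSet (A ∩ B'), use family {A \ B'}
      obtain ⟨p1, p2, p3, p4⟩ := single_props (A \ B') A (hA.diff hB'm) Set.diff_subset
      refine ⟨1, _, p1, p2, p3, p4, ?_, ?_⟩
      · rw [Finset.sum_range_one]; simpa using hnd
      · rw [single_iUnion]
        refine badSet_mono ?_ h1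
        intro z hz
        exact ⟨hz.1, fun hd => hd.2 hz.2⟩
    · -- BadSet (A \ B'), use family {B'}
      obtain ⟨p1, p2, p3, p4⟩ := single_props B' A hB'm hB's
      refine ⟨1, _, p1, p2, p3, p4, ?_, ?_⟩
      · rw [Finset.sum_range_one]
        simpa using le_trans (by linarith [norm_nonneg (ν A)]) hB'n.le
      · rwa [single_iUnion]

lemma exists_half_le (T : E →L[ℝ] ℝ) : ∃ x : E, ‖x‖ ≤ 1 ∧ ‖T‖ / 2 ≤ T x := by
  by_cases hT : ‖T‖ = 0
  · exact ⟨0, by simp, by simp [hT]⟩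
  · have hpos : 0 < ‖T‖ := lt_of_le_of_ne (norm_nonneg T) (Ne.symm hT)
    have h : ‖T‖ / 2 < ‖T‖ := by linarith
    obtain ⟨x, hx, hx2⟩ := T.exists_lt_apply_of_lt_opNorm h
    rcases le_or_gt 0 (T x) with h0 | h0
    · refine ⟨x, hx.le, ?_⟩
      rw [Real.norm_eq_abs, abs_of_nonneg h0] at hx2
      linarith
    · refine ⟨-x, by simpa using hx.le, ?_⟩
      rw [Real.norm_eq_abs, abs_of_neg h0] at hx2
      simp only [map_neg]
      linarith

end Aux

section Main

variable {Z E : Type*} [MeasurableSpace Z] [NormedAddCommGroup E] [NormedSpace ℝ E]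
variable {ν : Set Z → E →L[ℝ] ℝ}

lemma not_badSet_univ (hν : IsIMeasure ν) : ¬ BadSet ν Set.univ := by
  intro hbad
  have hstep := fun (p : {A : Set Z // MeasurableSet A ∧ BadSet ν A}) =>
    badSet_step hν p.2.1 p.2.2 1
  choose N B meas sub disj pad hsum bad using hstep
  let step : {A : Set Z // MeasurableSet A ∧ BadSet ν A} →
      {A : Set Z // MeasurableSet A ∧ BadSet ν A} :=
    fun p => ⟨p.1 \ ⋃ n, B p n,
      ⟨p.2.1.diff (MeasurableSet.iUnion fun n => meas p n), bad p⟩⟩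
  let seq : ℕ → {A : Set Z // MeasurableSet A ∧ BadSet ν A} :=
    fun k => step^[k] ⟨Set.univ, MeasurableSet.univ, hbad⟩
  have hseq : ∀ k, seq (k + 1) = step (seq k) := fun k =>
    Function.iterate_succ_apply' step k _
  have hmono : ∀ k, (seq (k + 1)).1 ⊆ (seq k).1 := by
    intro k; rw [hseq k]; exact Set.diff_subset
  have hmono' : ∀ {k j : ℕ}, k ≤ j → (seq j).1 ⊆ (seq k).1 := by
    intro k j h
    induction h with
    | refl => exact Set.Subset.rfl
    | step _ ih => exact (hmono _).trans ih
  let G : ℕ → Set Z := fun m => B (seq m.unpair.1) m.unpair.2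
  have hGmeas : ∀ m, MeasurableSet (G m) := fun m => meas _ _
  have hdisjoint_out : ∀ k n, Disjoint (B (seq k) n) ((seq (k + 1)).1) := by
    intro k n
    rw [hseq k]
    exact Set.disjoint_left.2 fun z hz hz' => hz'.2 (Set.mem_iUnion.2 ⟨n, hz⟩)
  have hGdisj : Pairwise (Function.onFun Disjoint G) := by
    intro m m' hne
    simp only [Function.onFun, G]
    rcases lt_trichotomy m.unpair.1 m'.unpair.1 with hlt | heq | hgt
    · exact (hdisjoint_out _ m.unpair.2).mono_right
        ((sub _ m'.unpair.2).trans (hmono' hlt))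
    · have hn : m.unpair.2 ≠ m'.unpair.2 := by
        intro hcontr
        exact hne (by rw [← Nat.pair_unpair m, ← Nat.pair_unpair m', heq, hcontr])
      rw [← heq]
      exact disj (seq m.unpair.1) hn
    · exact ((hdisjoint_out _ m'.unpair.2).mono_right
        ((sub _ m.unpair.2).trans (hmono' hgt))).symm
  have hxex : ∀ m, ∃ x : E, ‖x‖ ≤ 1 ∧ ‖ν (G m)‖ / 2 ≤ ν (G m) x :=
    fun m => exists_half_le (ν (G m))
  choose xs hxs1 hxs2 using hxex
  obtain ⟨y, hy⟩ := hν.2 G hGmeas hGdisj xs ⟨1, hxs1⟩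
  set t : ℕ → ℝ := fun m => ν (G m) (xs m) with ht
  have ht0 : ∀ m, 0 ≤ t m := fun m => le_trans (by positivity) (hxs2 m)
  have hsmono : Monotone fun Nn => ∑ n ∈ Finset.range Nn, t n := by
    intro a b hab
    exact Finset.sum_le_sum_of_subset_of_nonneg (Finset.range_subset_range.2 hab)
      (fun n _ _ => ht0 n)
  have hle : ∀ m, ∑ n ∈ Finset.range m, t n ≤ y := fun m => hsmono.ge_of_tendsto hy m
  obtain ⟨K, hK⟩ := exists_nat_gt (2 * y)
  have hblock : ∀ k, (1 : ℝ) / 2 ≤ ∑ n ∈ Finset.range (N (seq k)), t (Nat.pair k n) := by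
    intro k
    have h1 : ∀ n, ‖ν (B (seq k) n)‖ / 2 ≤ t (Nat.pair k n) := by
      intro n
      have hGe : G (Nat.pair k n) = B (seq k) n := by
        simp only [G, Nat.unpair_pair]
      have := hxs2 (Nat.pair k n)
      rw [hGe] at this
      simpa [ht, hGe] using this
    calc (1 : ℝ) / 2 ≤ (∑ n ∈ Finset.range (N (seq k)), ‖ν (B (seq k) n)‖) / 2 := by
          have := hsum (seq k); linarith
      _ = ∑ n ∈ Finset.range (N (seq k)), ‖ν (B (seq k) n)‖ / 2 := Finset.sum_div _ _ _
      _ ≤ _ := Finset.sum_le_sum fun n _ => h1 n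
  set T := (Finset.range K).biUnion
    (fun k => (Finset.range (N (seq k))).image (Nat.pair k)) with hT
  have hTsum : ∑ m ∈ T, t m
      = ∑ k ∈ Finset.range K, ∑ n ∈ Finset.range (N (seq k)), t (Nat.pair k n) := by
    rw [hT, Finset.sum_biUnion]
    · refine Finset.sum_congr rfl fun k _ => ?_
      rw [Finset.sum_image]
      intro a _ b _ hab
      have := congrArg (fun m => (Nat.unpair m).2) hab
      simpa [Nat.unpair_pair] using this
    · intro k _ k' _ hkk'
      refine Finset.disjoint_left.2 fun m hm hm' => ?_
      obtain ⟨a, _, rfl⟩ := Finset.mem_image.1 hm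
      obtain ⟨b, _, hb⟩ := Finset.mem_image.1 hm'
      have h2 : k' = k := by
        simpa [Nat.unpair_pair] using congrArg (fun m => (Nat.unpair m).1) hb
      exact hkk' h2.symm
  have hKle : (K : ℝ) / 2 ≤ ∑ m ∈ T, t m := by
    rw [hTsum]
    calc (K : ℝ) / 2 = ∑ _k ∈ Finset.range K, (1 : ℝ) / 2 := by
          rw [Finset.sum_const, Finset.card_range, nsmul_eq_mul]; ring
      _ ≤ _ := Finset.sum_le_sum fun k _ => hblock k
  have hTsub : T ⊆ Finset.range (T.sup id + 1) := fun m hm =>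
    Finset.mem_range.2 (Nat.lt_succ_of_le (Finset.le_sup (f := id) hm))
  have h6 : ∑ m ∈ T, t m ≤ ∑ m ∈ Finset.range (T.sup id + 1), t m :=
    Finset.sum_le_sum_of_subset_of_nonneg hTsub fun m _ _ => ht0 m
  have : (K : ℝ) / 2 ≤ y := le_trans hKle (le_trans h6 (hle _))
  linarith

lemma iMeasure_bound (hν : IsIMeasure ν) :
    ∃ M : ℝ, ∀ (N : ℕ) (B : ℕ → Set Z) (x : ℕ → E), (∀ n, MeasurableSet (B n)) →
      Pairwise (Function.onFun Disjoint B) → (∀ n, ‖x n‖ ≤ 1) →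
      ‖∑ n ∈ Finset.range N, ν (B n) (x n)‖ ≤ M := by
  have hnb := not_badSet_univ hν
  simp only [BadSet, not_forall, not_exists, not_and, not_le] at hnb
  obtain ⟨M, hM⟩ := hnb
  refine ⟨M, fun N B x hm hd hx => ?_⟩
  set B' : ℕ → Set Z := fun n => if n < N then B n else ∅ with hB'
  have hM' := hM N B'
    (fun n => by simp only [hB']; split_ifs; exacts [hm n, MeasurableSet.empty])
    (fun n => Set.subset_univ _)
    (by
      intro i j hij
      simp only [Function.onFun, hB']
      split_ifs
      · exact hd hij
      all_goals simp)
    (fun n hn => by simp [hB', Nat.not_lt.2 hn])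
  have h1 : ‖∑ n ∈ Finset.range N, ν (B n) (x n)‖
      ≤ ∑ n ∈ Finset.range N, ‖ν (B n)‖ := by
    refine le_trans (norm_sum_le _ _) (Finset.sum_le_sum fun n _ => ?_)
    calc ‖ν (B n) (x n)‖ ≤ ‖ν (B n)‖ * ‖x n‖ := (ν (B n)).le_opNorm _
      _ ≤ ‖ν (B n)‖ * 1 := by
          exact mul_le_mul_of_nonneg_left (hx n) (norm_nonneg _)
      _ = ‖ν (B n)‖ := mul_one _
  have h2 : ∑ n ∈ Finset.range N, ‖ν (B n)‖ = ∑ n ∈ Finset.range N, ‖ν (B' n)‖ := by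
    refine Finset.sum_congr rfl fun n hn => ?_
    rw [hB']
    simp [Finset.mem_range.1 hn]
  linarith [hM']

end Main

/-- A *weak\* i-measure* is an `L(E,F*)`-valued set function `μ` such that for every
`f ∈ F` the `E*`-valued set function `A ↦ ⟨f, μ(A)(·)⟩` is an i-measure. -/


def IsWeakStarIMeasure {Z E F : Type*} [MeasurableSpace Z]
    [NormedAddCommGroup E] [NormedSpace ℝ E] [NormedAddCommGroup F] [NormedSpace ℝ F]
    (μ : Set Z → E →L[ℝ] StrongDual ℝ F) : Prop :=
  ∀ f : F, IsIMeasure fun A => (μ A).flip f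

/-- Every weak* i-measure has finite total semivariation. -/
theorem weakStarIMeasure_semivar_ne_top {Z E F : Type*} [MeasurableSpace Z]
    [NormedAddCommGroup E] [NormedSpace ℝ E]
    [NormedAddCommGroup F] [NormedSpace ℝ F] [CompleteSpace F]
    (μ : Set Z → E →L[ℝ] StrongDual ℝ F) (hμ : IsWeakStarIMeasure μ) :
    semivar μ Set.univ ≠ ⊤ := by
  classical
  let ι := {p : ℕ × (ℕ → Set Z) × (ℕ → E) //
    (∀ n, MeasurableSet (p.2.1 n)) ∧ Pairwise (Function.onFun Disjoint p.2.1) ∧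
      ∀ n, ‖p.2.2 n‖ ≤ 1}
  let g : ι → F →L[ℝ] ℝ := fun p => ∑ n ∈ Finset.range p.1.1, μ (p.1.2.1 n) (p.1.2.2 n)
  have hpt : ∀ f : F, ∃ C, ∀ i, ‖g i f‖ ≤ C := by
    intro f
    obtain ⟨M, hM⟩ := iMeasure_bound (ν := fun A => (μ A).flip f) (hμ f)
    refine ⟨M, fun i => ?_⟩
    have he : g i f = ∑ n ∈ Finset.range i.1.1, ((μ (i.1.2.1 n)).flip f) (i.1.2.2 n) := by
      simp only [g, ContinuousLinearMap.sum_apply, ContinuousLinearMap.flip_apply]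
    rw [he]
    exact hM _ _ _ i.2.1 i.2.2.1 i.2.2.2
  obtain ⟨C, hC⟩ := banach_steinhaus hpt
  rw [semivar]
  refine ne_top_of_le_ne_top (ENNReal.ofReal_ne_top (r := C)) ?_
  refine iSup_le fun N => iSup_le fun B => iSup_le fun hm => iSup_le fun _ =>
    iSup_le fun hd => iSup_le fun x => iSup_le fun hx => ?_
  exact ENNReal.ofReal_le_ofReal (hC ⟨(N, B, x), hm, hd, hx⟩)
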